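/- Let (uₙ)_{n≥0} be a sequence of formal power series in x over ℝ, uₙ = Σ_{p≥0} b_{n,p} x^p, all of whose coefficients b_{n,p} are nonnegative, satisfying the recursion (n+1) u_{n+1} = Σ_{k=0}^{n} u_k · u'_{n−k} + u'''_n for every n ≥ 0 (where ' denotes the formal derivative d/dx). Suppose that for some integer d₀ ≥ 2 and some 0 < ε < 1 one has b_{0,d₀} > ε. Then, setting dₙ := n(d₀ − 1) + d₀, one has b_{n, dₙ} > ε^{n+1} for every n ≥ 1. -/

import Mathlib

/-- **The nonpolynomial case for the KdV recursion (Section 2.2).**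
Let `(uₙ)` be formal power series in `x` over `ℝ`, `uₙ = ∑ b_{n,p} x^p`, with all
coefficients nonnegative, satisfying the KdV recursion
`(n+1) u_{n+1} = ∑_{k=0}^{n} u_k u'_{n-k} + u'''_n` (formal derivatives).  If
`b_{0,d₀} > ε` for some integer `d₀ ≥ 2` and some `0 < ε < 1`, then with
`dₙ := n(d₀-1)+d₀` one has `b_{n,dₙ} > ε^{n+1}` for every `n ≥ 1`. -/
theorem kdv_recursion_powerSeries_coeff_bound
    (u : ℕ → PowerSeries ℝ)
    (hnonneg : ∀ n p, 0 ≤ PowerSeries.coeff (R := ℝ) p (u n))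
    (hrec : ∀ n : ℕ, ((n : ℝ) + 1) • u (n + 1) =
      ∑ k ∈ Finset.range (n + 1), u k * PowerSeries.derivative ℝ (u (n - k))
        + PowerSeries.derivative ℝ (PowerSeries.derivative ℝ (PowerSeries.derivative ℝ (u n))))
    (d₀ : ℕ) (hd₀ : 2 ≤ d₀)
    (ε : ℝ) (hε0 : 0 < ε) (hε1 : ε < 1)
    (hb0 : ε < PowerSeries.coeff (R := ℝ) d₀ (u 0)) :
    ∀ n : ℕ, 1 ≤ n →
      ε ^ (n + 1) < PowerSeries.coeff (R := ℝ) (n * (d₀ - 1) + d₀) (u n) := by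
  obtain ⟨m, rfl⟩ : ∃ m, d₀ = m + 2 := ⟨d₀ - 2, by omega⟩
  have hderiv_nonneg : ∀ (f : PowerSeries ℝ), (∀ p, 0 ≤ PowerSeries.coeff (R := ℝ) p f) →
      ∀ p, 0 ≤ PowerSeries.coeff (R := ℝ) p (PowerSeries.derivative ℝ f) := by
    intro f hf p
    rw [PowerSeries.coeff_derivative]
    exact mul_nonneg (hf _) (by positivity)
  suffices H : ∀ n : ℕ, ε ^ (n + 1) < PowerSeries.coeff (R := ℝ) (n * (m + 1) + (m + 2)) (u n) by
    exact fun n _ => H n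
  intro n
  induction n with
  | zero => simpa using hb0
  | succ n ih =>
    set d : ℕ := n * (m + 1) + (m + 2) with hd
    set D : ℕ := (n + 1) * (m + 1) + (m + 2) with hDdef
    have hkey := congrArg (PowerSeries.coeff (R := ℝ) D) (hrec n)
    rw [map_smul, map_add, map_sum, smul_eq_mul] at hkey
    -- the k = 0 term
    have hmem : (m + 2, (n + 1) * (m + 1)) ∈ Finset.HasAntidiagonal.antidiagonal D := by
      rw [Finset.HasAntidiagonal.mem_antidiagonal]
      simp only [hDdef]
      ring
    have hcoeffder : PowerSeries.coeff (R := ℝ) ((n + 1) * (m + 1)) (PowerSeries.derivative ℝ (u n))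
        = PowerSeries.coeff (R := ℝ) d (u n) * d := by
      have h1 : (n + 1) * (m + 1) + 1 = d := by rw [hd]; ring
      rw [PowerSeries.coeff_derivative, ← h1]
      push_cast
      ring
    have hterm0 : PowerSeries.coeff (R := ℝ) (m + 2) (u 0) * (PowerSeries.coeff (R := ℝ) d (u n) * (d : ℝ))
        ≤ PowerSeries.coeff (R := ℝ) D (u 0 * PowerSeries.derivative ℝ (u (n - 0))) := by
      rw [Nat.sub_zero, PowerSeries.coeff_mul]
      rw [← hcoeffder]
      refine Finset.single_le_sum (f := fun p =>
        PowerSeries.coeff (R := ℝ) p.1 (u 0) * PowerSeries.coeff (R := ℝ) p.2 (PowerSeries.derivative ℝ (u n)))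
        (fun p _ => mul_nonneg (hnonneg _ _) (hderiv_nonneg _ (hnonneg n) _)) hmem
    have hsum : PowerSeries.coeff (R := ℝ) D (u 0 * PowerSeries.derivative ℝ (u (n - 0)))
        ≤ ∑ k ∈ Finset.range (n + 1),
          PowerSeries.coeff (R := ℝ) D (u k * PowerSeries.derivative ℝ (u (n - k))) := by
      refine Finset.single_le_sum (f := fun k =>
        PowerSeries.coeff (R := ℝ) D (u k * PowerSeries.derivative ℝ (u (n - k)))) ?_ (by simp)
      intro k _
      show 0 ≤ PowerSeries.coeff (R := ℝ) D (u k * PowerSeries.derivative ℝ (u (n - k)))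
      rw [PowerSeries.coeff_mul]
      exact Finset.sum_nonneg fun p _ =>
        mul_nonneg (hnonneg _ _) (hderiv_nonneg _ (hnonneg _) _)
    have h3 : 0 ≤ PowerSeries.coeff (R := ℝ) D (PowerSeries.derivative ℝ (PowerSeries.derivative ℝ
        (PowerSeries.derivative ℝ (u n)))) :=
      hderiv_nonneg _ (hderiv_nonneg _ (hderiv_nonneg _ (hnonneg n))) _
    -- combine
    have hdpos : (0:ℝ) < d := by positivity
    have hεn : (0:ℝ) < ε ^ (n + 1) := by positivity
    have hstep1 : ε * (ε ^ (n + 1) * d) <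
        PowerSeries.coeff (R := ℝ) (m + 2) (u 0) * (PowerSeries.coeff (R := ℝ) d (u n) * (d : ℝ)) := by
      have h2 : ε ^ (n + 1) * d < PowerSeries.coeff (R := ℝ) d (u n) * d :=
        mul_lt_mul_of_pos_right ih hdpos
      exact mul_lt_mul' (le_of_lt hb0) h2 (by positivity) (lt_of_lt_of_le hε0 (le_of_lt hb0))
      |>.trans_le (le_refl _)
    have hbig : ((n : ℝ) + 1) * ε ^ (n + 1 + 1) < ((n : ℝ) + 1) * PowerSeries.coeff (R := ℝ) D (u (n + 1)) := by
      rw [hkey]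
      have hd_ge : (n : ℝ) + 1 ≤ (d : ℝ) := by
        have hle : n ≤ n * (m + 1) := Nat.le_mul_of_pos_right n (by omega)
        have : n + 1 ≤ d := by omega
        exact_mod_cast this
      have : ((n : ℝ) + 1) * ε ^ (n + 1 + 1) ≤ ε * (ε ^ (n + 1) * d) := by
        have := mul_le_mul_of_nonneg_left hd_ge (le_of_lt (mul_pos hε0 hεn))
        calc ((n : ℝ) + 1) * ε ^ (n + 1 + 1) = (ε * ε ^ (n + 1)) * ((n:ℝ) + 1) := by ring
          _ ≤ (ε * ε ^ (n + 1)) * d := this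
          _ = ε * (ε ^ (n + 1) * d) := by ring
      calc ((n : ℝ) + 1) * ε ^ (n + 1 + 1) ≤ ε * (ε ^ (n + 1) * d) := this
        _ < PowerSeries.coeff (R := ℝ) (m + 2) (u 0) * (PowerSeries.coeff (R := ℝ) d (u n) * (d : ℝ)) := hstep1
        _ ≤ _ := le_add_of_le_of_nonneg (hterm0.trans hsum) h3
    have hnpos : (0:ℝ) < (n : ℝ) + 1 := by positivity
    have := lt_of_mul_lt_mul_left hbig (le_of_lt hnpos)
    convert this using 2
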